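/- Let Q be a commutative unital quantale and Σ a class of ideals of Q, equipped with the quantale topology generated by the sets X↑ = {J ∈ Σ : ⋀X ≤ J} (for nonempty sets X of ideals) as a subbasis of closed sets. If Σ contains every maximal ideal of Q, then Σ is quasi-compact. -/

import Mathlib

namespace QuantalePaper

/-- An ideal of a complete lattice: nonempty, downward closed, closed under binary joins. -/
structure QIdeal (Q : Type*) [CompleteLattice Q] where
  carrier : Set Q
  nonempty' : carrier.Nonempty
  sup_mem' : ∀ ⦃x⦄, x ∈ carrier → ∀ ⦃y⦄, y ∈ carrier → x ⊔ y ∈ carrier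
  lower' : ∀ ⦃x⦄, x ∈ carrier → ∀ ⦃l : Q⦄, l ≤ x → l ∈ carrier

namespace QIdeal

variable {Q : Type*} [CompleteLattice Q]

instance : SetLike (QIdeal Q) Q where
  coe := carrier
  coe_injective := by rintro ⟨a,_,_,_⟩ ⟨b,_,_,_⟩ h; simpa using h

instance : PartialOrder (QIdeal Q) := .ofSetLike (QIdeal Q) Q

/-- A proper ideal. -/
def IsProper (I : QIdeal Q) : Prop := (⊤ : Q) ∉ I

/-- A maximal ideal: a proper ideal maximal among proper ideals. -/
def IsMaximal (I : QIdeal Q) : Prop :=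
  I.IsProper ∧ ∀ J : QIdeal Q, J.IsProper → I ≤ J → J = I

/-- A prime ideal. -/
def IsPrime [Mul Q] (I : QIdeal Q) : Prop :=
  I.IsProper ∧ ∀ x y : Q, x * y ∈ I → x ∈ I ∨ y ∈ I

end QIdeal

variable {Q : Type*} [CompleteLattice Q]

/-- The subbasic closed set `I↑ ∩ Σ` inside the subtype of a class `S` of ideals. -/
def up (S : Set (QIdeal Q)) (I : QIdeal Q) : Set ↥S := {J : ↥S | (I : Set Q) ⊆ (J : QIdeal Q)}

/-- The quantale topology on a class `S` of ideals, generated by the sets `up S I`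
as a subbasis of closed sets. -/
def qTop (S : Set (QIdeal Q)) : TopologicalSpace ↥S :=
  .generateFrom {U | ∃ I : QIdeal Q, U = (up S I)ᶜ}

/-- `X↑` for a set `X` of ideals: members of `S` containing the intersection `⋀X`,
with `∅↑ = ∅`. -/
def upSet (S : Set (QIdeal Q)) (X : Set (QIdeal Q)) : Set ↥S :=
  {J : ↥S | X.Nonempty ∧ ∀ x : Q, (∀ I ∈ X, x ∈ I) → x ∈ (J : QIdeal Q)}


lemma QIdeal.bot_mem {Q : Type*} [CompleteLattice Q] (I : QIdeal Q) : (⊥ : Q) ∈ I := by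
  obtain ⟨x, hx⟩ := I.nonempty'
  exact I.lower' hx bot_le

lemma QIdeal.finset_sup_mem {Q : Type*} [CompleteLattice Q] (I : QIdeal Q) (s : Finset Q)
    (h : ∀ y ∈ s, y ∈ I) : s.sup id ∈ I := by
  classical
  induction s using Finset.induction with
  | empty => simpa using I.bot_mem
  | @insert a s has ih =>
    rw [Finset.sup_insert]
    exact I.sup_mem' (h a (Finset.mem_insert_self a s))
      (ih fun y hy => h y (Finset.mem_insert_of_mem hy))

/-- Every proper ideal is contained in a maximal ideal. -/
lemma QIdeal.exists_maximal {Q : Type*} [CompleteLattice Q] (K : QIdeal Q) (hK : K.IsProper) :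
    ∃ M : QIdeal Q, M.IsMaximal ∧ K ≤ M := by
  have hchainub : ∀ c ⊆ {J : QIdeal Q | J.IsProper}, IsChain (· ≤ ·) c →
      ∀ y ∈ c, ∃ ub ∈ {J : QIdeal Q | J.IsProper}, ∀ z ∈ c, z ≤ ub := by
    intro c hcs hchain y hyc
    refine ⟨⟨⋃ J ∈ c, (J : Set Q), ⟨⊥, Set.mem_biUnion hyc y.bot_mem⟩, ?_, ?_⟩, ?_, ?_⟩
    · rintro x hx z hz
      simp only [Set.mem_iUnion] at hx hz ⊢
      obtain ⟨J₁, hJ₁, hx⟩ := hx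
      obtain ⟨J₂, hJ₂, hz⟩ := hz
      rcases hchain.total hJ₁ hJ₂ with h | h
      · exact ⟨J₂, hJ₂, J₂.sup_mem' (h hx) hz⟩
      · exact ⟨J₁, hJ₁, J₁.sup_mem' hx (h hz)⟩
    · rintro x hx l hl
      simp only [Set.mem_iUnion] at hx ⊢
      obtain ⟨J, hJ, hx⟩ := hx
      exact ⟨J, hJ, J.lower' hx hl⟩
    · intro h
      obtain ⟨J, hJ, htop⟩ := Set.mem_iUnion₂.1 h
      exact (hcs hJ) htop
    · intro z hz x hx
      exact Set.mem_biUnion hz hx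
  obtain ⟨m, hKm, hm⟩ := zorn_le_nonempty₀ {J : QIdeal Q | J.IsProper} hchainub K hK
  exact ⟨m, ⟨hm.1, fun J hJ hmJ => le_antisymm (hm.2 hJ hmJ) hmJ⟩, hKm⟩

theorem stmt3 [CommMonoid Q] [IsQuantale Q] (htop : (1 : Q) = ⊤) (S : Set (QIdeal Q))
    (hmax : ∀ M : QIdeal Q, M.IsMaximal → M ∈ S) :
    @CompactSpace ↥S (qTop S) := by
  classical
  letI := qTop S
  rw [← isCompact_univ_iff]
  rw [isCompact_iff_ultrafilter_le_nhds]
  intro F _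
  -- The family of ideals whose subbasic closed set lies in F
  set T : Set (QIdeal Q) := {I | up S I ∈ F} with hT
  -- The ideal generated by the union of T
  set KC : Set Q := {x : Q | ∃ s : Finset Q, (∀ y ∈ s, ∃ I ∈ T, y ∈ I) ∧ x ≤ s.sup id} with hKC
  have Kne : KC.Nonempty := ⟨⊥, ∅, by simp, by simp⟩
  have Ksup : ∀ ⦃x⦄, x ∈ KC → ∀ ⦃z⦄, z ∈ KC → x ⊔ z ∈ KC := by
    rintro x ⟨s, hs, hxs⟩ z ⟨t, ht, hzt⟩
    refine ⟨s ∪ t, ?_, ?_⟩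
    · intro y hy
      rcases Finset.mem_union.1 hy with h | h
      · exact hs y h
      · exact ht y h
    · exact sup_le (hxs.trans (Finset.sup_mono Finset.subset_union_left))
        (hzt.trans (Finset.sup_mono Finset.subset_union_right))
  have Klow : ∀ ⦃x⦄, x ∈ KC → ∀ ⦃l : Q⦄, l ≤ x → l ∈ KC := by
    rintro x ⟨s, hs, hxs⟩ l hl
    exact ⟨s, hs, hl.trans hxs⟩
  set K : QIdeal Q := ⟨KC, Kne, Ksup, Klow⟩ with hKdef
  -- Key: a point of S containing every ideal of T gives a limit of F
  suffices h : ∃ J : ↥S, ∀ I ∈ T, (I : Set Q) ⊆ (J : QIdeal Q) by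
    obtain ⟨J, hJ⟩ := h
    refine ⟨J, trivial, ?_⟩
    show ↑F ≤ @nhds _ (TopologicalSpace.generateFrom {U | ∃ I : QIdeal Q, U = (up S I)ᶜ}) J
    rw [TopologicalSpace.nhds_generateFrom]
    refine le_iInf fun U => le_iInf fun hU => ?_
    obtain ⟨hJU, I, rfl⟩ := hU
    rw [Filter.le_principal_iff]
    rcases F.mem_or_compl_mem (up S I) with hmem | hmem
    · exact absurd (hJ I hmem) hJU
    · exact hmem
  by_cases hK : K.IsProper
  · obtain ⟨M, hM, hKM⟩ := K.exists_maximal hK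
    refine ⟨⟨M, hmax M hM⟩, fun I hI x hx => ?_⟩
    exact hKM ⟨{x}, fun y hy => ⟨I, hI, by simpa using Finset.mem_singleton.1 hy ▸ hx⟩, by simp⟩
  · -- ⊤ ∈ K: finitely many ideals of T have ⊤ below the sup of chosen elements
    simp only [QIdeal.IsProper, not_not] at hK
    obtain ⟨s, hs, htop⟩ : ∃ s : Finset Q, (∀ y ∈ s, ∃ I ∈ T, y ∈ I) ∧ (⊤ : Q) ≤ s.sup id := hK
    choose f hfT hfy using hs
    have hinter : (⋂ y : {y // y ∈ s}, up S (f y.1 y.2)) ∈ F := by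
      exact Filter.iInter_mem.2 fun y => hfT y.1 y.2
    obtain ⟨J, hJ⟩ := F.nonempty_of_mem hinter
    have hJ' : ∀ (y) (hy : y ∈ s), (f y hy : Set Q) ⊆ (J : QIdeal Q) := by
      intro y hy
      exact Set.mem_iInter.1 hJ ⟨y, hy⟩
    have hJtop : (⊤ : Q) ∈ (J : QIdeal Q) := by
      have hsup : s.sup id ∈ (J : QIdeal Q) := by
        refine QIdeal.finset_sup_mem _ s fun y hy => ?_
        exact hJ' y hy (hfy y hy)
      exact (J : QIdeal Q).lower' hsup (le_top.trans htop)
    exact ⟨J, fun I _ x _ => (J : QIdeal Q).lower' hJtop le_top⟩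

end QuantalePaper
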